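/- For 0 < α ≤ 2 - √2 and p = 1 - α, the function g(s) = s² - e^{α(s-1)}(s(2-α) + α - 1) satisfies g(s) > 0 for all s ∈ [0,1) and g(1) = 0. -/
import Mathlib


open Real

theorem g_pos_small_alpha (α : ℝ) (hα0 : 0 < α) (hα : α ≤ 2 - Real.sqrt 2) :
    (∀ s ∈ Set.Ico (0:ℝ) 1, 0 < s^2 - Real.exp (α*(s-1)) * (s*(2-α) + α - 1)) ∧
    (1:ℝ)^2 - Real.exp (α*(1-1)) * (1*(2-α) + α - 1) = 0 := by
  have hs2 : Real.sqrt 2 ≥ 1 := by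
    nlinarith [Real.sq_sqrt (by norm_num : (2:ℝ) ≥ 0), Real.sqrt_nonneg 2]
  have hα1 : α ≤ 1 := by linarith
  have hdisc : α^2 - 4*α + 2 ≥ 0 := by
    have h2 : Real.sqrt 2 ≤ 2 - α := by linarith
    nlinarith [Real.sq_sqrt (by norm_num : (2:ℝ) ≥ 0), Real.sqrt_nonneg 2]
  constructor
  · intro s hs
    obtain ⟨hs0, hs1⟩ := hs
    set x := α * (1 - s) with hx
    have hxpos : 0 ≤ x := by
      have : 0 ≤ 1 - s := by linarith
      positivity
    have hexp : 1 + x + x^2/2 ≤ Real.exp x := by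
      have := Real.sum_le_exp_of_nonneg hxpos 3
      simp [Finset.sum_range_succ, Nat.factorial] at this
      nlinarith [this]
    have key : s*(2-α) + α - 1 < s^2 * Real.exp x := by
      have hpoly : s*(2-α) + α - 1 < s^2 * (1 + x + x^2/2) := by
        rw [hx]
        nlinarith [mul_nonneg (mul_nonneg (sq_nonneg (1-s)) (by linarith : (0:ℝ) ≤ 1 - s))
            (mul_nonneg hα0.le (by linarith : (0:ℝ) ≤ 1 - α)),
          mul_nonneg (sq_nonneg (1-s)) hdisc,
          mul_pos (mul_pos (pow_pos (by linarith : (0:ℝ) < 1 - s) 2)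
            (pow_pos (by linarith : (0:ℝ) < 1 - s) 2)) (mul_pos hα0 hα0)]
      calc s*(2-α) + α - 1 < s^2 * (1 + x + x^2/2) := hpoly
        _ ≤ s^2 * Real.exp x := by nlinarith [sq_nonneg s]
    have hmul : Real.exp (α*(s-1)) * Real.exp x = 1 := by
      rw [← Real.exp_add]
      norm_num [hx]
      ring_nf
    nlinarith [mul_pos (Real.exp_pos (α*(s-1)))
        (by linarith : (0:ℝ) < s^2 * Real.exp x - (s*(2-α) + α - 1)),
      Real.exp_pos (α*(s-1)), hmul]
  · norm_num
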